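/- Matching lemma: Let n ≥ 1, let λ₁,…,λₙ be real numbers with Σ_{i=1}^n λ_i = 0, and let x₁,…,xₙ ∈ ℝ^d. Then there exist a finite index set, nonnegative coefficients c_l, and for each l indices j_l, k_l ∈ {1,…,n} with λ_{j_l} ≥ 0 and λ_{k_l} < 0, such that Σ_{i=1}^n λ_i x_i = Σ_l c_l (x_{j_l} − x_{k_l}) and Σ_l c_l = Σ_{i : λ_i ≥ 0} λ_i. -/

import Mathlib

/-- **Matching lemma.** Given real numbers `λ₁,…,λₙ` summing to zero and vectors
`x₁,…,xₙ ∈ ℝ^d`, the terms with nonnegative coefficients can be matched with the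
terms with negative coefficients: there are finitely many nonnegative coefficients
`c l` and indices `j l, k l` with `λ (j l) ≥ 0`, `λ (k l) < 0` such that
`∑ i, λ i • x i = ∑ l, c l • (x (j l) - x (k l))` and `∑ l, c l = ∑_{i : λ i ≥ 0} λ i`. -/
theorem matching_lemma (n d : ℕ) (hn : 1 ≤ n) (hd : 1 ≤ d)
    (lam : Fin n → ℝ) (hsum : ∑ i, lam i = 0)
    (x : Fin n → EuclideanSpace ℝ (Fin d)) :
    ∃ (m : ℕ) (c : Fin m → ℝ) (j k : Fin m → Fin n),
      (∀ l, 0 ≤ c l) ∧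
      (∀ l, 0 ≤ lam (j l)) ∧
      (∀ l, lam (k l) < 0) ∧
      (∑ i, lam i • x i) = (∑ l, c l • (x (j l) - x (k l))) ∧
      (∑ l, c l) = ∑ i ∈ Finset.univ.filter (fun i => 0 ≤ lam i), lam i := by
  classical
  set pos := Finset.univ.filter (fun i => 0 ≤ lam i) with hposdef
  set neg := Finset.univ.filter (fun i => lam i < 0) with hnegdef
  have hnegcompl : neg = Finset.univ.filter (fun i => ¬ 0 ≤ lam i) := by
    simp [hnegdef, not_le]
  set S := ∑ i ∈ pos, lam i with hSdef
  have hsplit : S + ∑ i ∈ neg, lam i = 0 := by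
    rw [hSdef, hnegcompl, Finset.sum_filter_add_sum_filter_not]; exact hsum
  have hnegsum : ∑ i ∈ neg, lam i = -S := by linarith
  have hS0 : 0 ≤ S :=
    Finset.sum_nonneg (fun i hi => (Finset.mem_filter.mp hi).2)
  by_cases hSz : S = 0
  · have hnegempty : neg = ∅ := by
      by_contra h
      have hne : neg.Nonempty := Finset.nonempty_iff_ne_empty.mpr h
      have : ∑ i ∈ neg, lam i < 0 :=
        Finset.sum_neg (fun i hi => (Finset.mem_filter.mp hi).2) hne
      rw [hnegsum, hSz] at this; linarith
    have hall : ∀ i, lam i = 0 := by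
      intro i
      have hi : i ∈ pos := by
        by_contra h
        have hlt : lam i < 0 := by
          have := Finset.mem_filter.not.mp h
          push_neg at this
          exact this (Finset.mem_univ i)
        have : i ∈ neg := Finset.mem_filter.mpr ⟨Finset.mem_univ i, hlt⟩
        rw [hnegempty] at this
        exact absurd this (Finset.notMem_empty i)
      exact (Finset.sum_eq_zero_iff_of_nonneg
        (fun i hi => (Finset.mem_filter.mp hi).2)).mp hSz i hi
    refine ⟨0, Fin.elim0, Fin.elim0, Fin.elim0,
      (fun l => l.elim0), (fun l => l.elim0), (fun l => l.elim0), ?_, ?_⟩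
    · simp [hall]
    · simp [← hSdef, hSz]
  · have hSpos : 0 < S := lt_of_le_of_ne hS0 (Ne.symm hSz)
    have hposne : pos.Nonempty := by
      rw [Finset.nonempty_iff_ne_empty]
      intro h
      rw [hSdef, h, Finset.sum_empty] at hSz
      exact hSz rfl
    obtain ⟨j0, hj0⟩ := hposne
    have hnegne : neg.Nonempty := by
      rw [Finset.nonempty_iff_ne_empty]
      intro h
      rw [h, Finset.sum_empty] at hnegsum
      exact hSz (by linarith)
    obtain ⟨k0, hk0⟩ := hnegne
    have hj0' : 0 ≤ lam j0 := (Finset.mem_filter.mp hj0).2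
    have hk0' : lam k0 < 0 := (Finset.mem_filter.mp hk0).2
    have hnegS : ∑ b ∈ neg, (-lam b) = S := by
      rw [Finset.sum_neg_distrib, hnegsum, neg_neg]
    set C : Fin n × Fin n → ℝ :=
      fun p => if 0 ≤ lam p.1 ∧ lam p.2 < 0 then lam p.1 * (-lam p.2) / S else 0
      with hCdef
    set J : Fin n × Fin n → Fin n := fun p => if 0 ≤ lam p.1 then p.1 else j0 with hJdef
    set K : Fin n × Fin n → Fin n := fun p => if lam p.2 < 0 then p.2 else k0 with hKdef
    have hfilt : ∀ {M : Type} [AddCommMonoid M] (g : Fin n → Fin n → M),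
        (∑ a : Fin n, ∑ b : Fin n, if 0 ≤ lam a ∧ lam b < 0 then g a b else 0)
          = ∑ a ∈ pos, ∑ b ∈ neg, g a b := by
      intro M _ g
      rw [hposdef, hnegdef]
      conv_rhs => rw [Finset.sum_filter]
      refine Finset.sum_congr rfl fun a _ => ?_
      by_cases h1 : 0 ≤ lam a
      · simp only [h1, if_true, true_and]
        rw [Finset.sum_filter]
      · simp [h1]
    refine ⟨n * n, fun l => C ((finProdFinEquiv).symm l),
      fun l => J ((finProdFinEquiv).symm l), fun l => K ((finProdFinEquiv).symm l),
      ?_, ?_, ?_, ?_, ?_⟩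
    · intro l
      simp only [hCdef]
      split_ifs with h
      · exact div_nonneg (mul_nonneg h.1 (by linarith [h.2])) hS0
      · exact le_refl 0
    · intro l
      simp only [hJdef]
      split_ifs with h
      · exact h
      · exact hj0'
    · intro l
      simp only [hKdef]
      split_ifs with h
      · exact h
      · exact hk0'
    · have hterm : ∀ p : Fin n × Fin n, C p • (x (J p) - x (K p))
          = if 0 ≤ lam p.1 ∧ lam p.2 < 0 then (lam p.1 * -lam p.2 / S) • (x p.1 - x p.2)
            else 0 := by
        intro p
        simp only [hCdef, hJdef, hKdef]
        by_cases h1 : 0 ≤ lam p.1 <;> by_cases h2 : lam p.2 < 0 <;> simp [h1, h2]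
      rw [Equiv.sum_comp (finProdFinEquiv).symm
        (fun p => C p • (x (J p) - x (K p)))]
      rw [Finset.sum_congr rfl (fun p _ => hterm p)]
      rw [Fintype.sum_prod_type]
      rw [hfilt (fun a b => (lam a * -lam b / S) • (x a - x b))]
      set X := ∑ a ∈ pos, lam a • x a with hX
      set Y := ∑ b ∈ neg, lam b • x b with hY
      have hXY : ∑ i, lam i • x i = X + Y := by
        rw [hX, hY, hnegcompl, Finset.sum_filter_add_sum_filter_not]
      have hinner : ∀ a : Fin n,
          ∑ b ∈ neg, (lam a * -lam b / S) • (x a - x b)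
            = lam a • x a + (lam a / S) • Y := by
        intro a
        have step1 : ∀ b : Fin n, (lam a * -lam b / S) • (x a - x b)
            = (lam a / S) • ((-lam b) • (x a - x b)) := by
          intro b
          rw [smul_smul]
          ring_nf
        rw [Finset.sum_congr rfl (fun b _ => step1 b), ← Finset.smul_sum]
        have : ∑ b ∈ neg, (-lam b) • (x a - x b)
            = S • x a + Y := by
          have : ∀ b : Fin n, (-lam b) • (x a - x b)
              = (-lam b) • x a + lam b • x b := by
            intro b
            rw [smul_sub]
            module
          rw [Finset.sum_congr rfl (fun b _ => this b), Finset.sum_add_distrib,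
            ← Finset.sum_smul, hnegS, hY]
        rw [this, smul_add, smul_smul, div_mul_cancel₀ _ hSz]
      rw [Finset.sum_congr rfl (fun a _ => hinner a), Finset.sum_add_distrib,
        ← Finset.sum_smul, ← Finset.sum_div, ← hSdef, div_self hSz, one_smul,
        ← hX, hXY]
    · rw [Equiv.sum_comp (finProdFinEquiv).symm C]
      have : ∑ p : Fin n × Fin n, C p
          = ∑ a ∈ pos, ∑ b ∈ neg, lam a * -lam b / S := by
        rw [hCdef, Fintype.sum_prod_type]
        exact hfilt (fun a b => lam a * -lam b / S)
      rw [this]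
      have : ∀ a : Fin n, ∑ b ∈ neg, lam a * -lam b / S = lam a := by
        intro a
        rw [← Finset.sum_div, ← Finset.mul_sum, hnegS, mul_div_assoc,
          div_self hSz, mul_one]
      rw [Finset.sum_congr rfl (fun a _ => this a)]
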